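/- For fixed w > 0 and the barrel B = ⋃_{j ∈ ℕ} {(x,y) ∈ Q_j × Q_j : x ⪯ y + w/j} in (P,V), no ũ is contained in B: for every u ∈ V there exist j ∈ ℕ and a,b > 0 with w < a − b < ju, so that (a_j, b_j) ∈ ũ = {(x,y) ∈ P² : x ⪯ y + u} but (a_j, b_j) ∉ B. Consequently the locally convex cone (P,V) is barreled but not upper-barreled. -/

import Mathlib

open scoped NNReal ENNReal

/-- The positive reals, used for the values `a` in elements `a_i`. -/
abbrev Rpos := {a : ℝ // 0 < a}

/-- The cone `P = {a_i : a ∈ (0,∞), i ∈ ℕ} ∪ {0₀, ∞_∞}`. -/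
inductive CP : Type where
  | zero : CP
  | inf : CP
  | elt : Rpos → ℕ+ → CP

namespace CP

/-- Addition on `P`. -/
def add : CP → CP → CP
  | zero, x => x
  | x, zero => x
  | inf, _ => inf
  | _, inf => inf
  | elt a i, elt b j =>
      if i = j then elt ⟨a.1 + b.1, add_pos a.2 b.2⟩ i else inf

/-- Scalar multiplication by nonnegative reals on `P`. -/
noncomputable def smul (r : ℝ≥0) (x : CP) : CP :=
  if h : r = 0 then zero
  else
    match x with
    | zero => zero
    | inf => inf
    | elt a i => elt ⟨(r : ℝ) * a.1,
        mul_pos (by exact_mod_cast pos_iff_ne_zero.mpr h) a.2⟩ i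

/-- The preorder on `P`: `a_i ⪯ b_j` iff `i = j` and `a ≤ b`. -/
def le : CP → CP → Prop
  | zero, zero => True
  | inf, inf => True
  | elt a i, elt b j => i = j ∧ a.1 ≤ b.1
  | _, _ => False

/-- The neighborhood relation: `nrel v x y` means `x ⪯ y + v`. -/
def nrel (v : ℝ) : CP → CP → Prop
  | zero, _ => True
  | _, inf => True
  | elt a i, elt b j => i = j ∧ a.1 ≤ b.1 + (i : ℝ) * v
  | _, _ => False

/-- The subcone `Q_j = {b_j : b ∈ (0,∞)} ∪ {0₀, ∞_∞}`. -/
def Q (j : ℕ+) : Set CP := {x | x = zero ∨ x = inf ∨ ∃ a : Rpos, x = elt a j}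

/-- Symmetric neighborhood of `b` relative to the subcone `Qs`. -/
def symN (Qs : Set CP) (v : ℝ) (b : CP) : Set CP :=
  {a ∈ Qs | nrel v a b ∧ nrel v b a}

/-- Linearity of a functional `μ : P → ℝ ∪ {+∞}` relative to a subcone. -/
def IsLinearOn (Qs : Set CP) (μ : CP → EReal) : Prop :=
  μ zero = 0 ∧ (∀ x, μ x ≠ ⊥) ∧
  (∀ x ∈ Qs, ∀ y ∈ Qs, μ (add x y) = μ x + μ y) ∧
  (∀ r : ℝ≥0, ∀ x ∈ Qs, μ (smul r x) = ((r : ℝ) : EReal) * μ x)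

/-- (Uniform) continuity of a functional relative to a subcone. -/
def IsContOn (Qs : Set CP) (μ : CP → EReal) : Prop :=
  ∃ v : ℝ, 0 < v ∧ ∀ x ∈ Qs, ∀ y ∈ Qs, nrel v x y → μ x ≤ μ y + 1

/-- Membership in the dual cone of the subcone `Qs`. -/
def InDualOn (Qs : Set CP) (μ : CP → EReal) : Prop :=
  IsLinearOn Qs μ ∧ IsContOn Qs μ

/-- `λ B = {(λx, λy) : (x,y) ∈ B}`. -/
def scaleSet (l : ℝ≥0) (B : Set (CP × CP)) : Set (CP × CP) :=
  (fun p => (smul l p.1, smul l p.2)) '' B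

/-- `B` is a barrel in the subcone `Qs`. -/
def IsBarrelOn (Qs : Set CP) (B : Set (CP × CP)) : Prop :=
  (∀ p ∈ B, p.1 ∈ Qs ∧ p.2 ∈ Qs) ∧
  (∀ p ∈ B, ∀ q ∈ B, ∀ t : ℝ≥0, t ≤ 1 →
     (add (smul t p.1) (smul (1 - t) q.1),
      add (smul t p.2) (smul (1 - t) q.2)) ∈ B) ∧
  (∀ b ∈ Qs, ∃ v : ℝ, 0 < v ∧ ∀ a ∈ symN Qs v b,
     ∃ l : ℝ≥0, 0 < l ∧ (a, b) ∈ scaleSet l B) ∧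
  (∀ a ∈ Qs, ∀ b ∈ Qs, (a, b) ∉ B → ∃ μ : CP → EReal, InDualOn Qs μ ∧
     μ b + 1 < μ a ∧ ∀ p ∈ B, μ p.1 ≤ μ p.2 + 1)

/-- The subcone `Qs` is barreled. -/
def BarreledOn (Qs : Set CP) : Prop :=
  ∀ B, IsBarrelOn Qs B → ∀ b ∈ Qs, ∃ v : ℝ, 0 < v ∧ ∃ l : ℝ≥0, 0 < l ∧
    ∀ a ∈ symN Qs v b, (a, b) ∈ scaleSet l B

/-- The subcone `Qs` is upper-barreled. -/
def UpperBarreledOn (Qs : Set CP) : Prop :=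
  ∀ B, IsBarrelOn Qs B → ∃ v : ℝ, 0 < v ∧
    ∀ p : CP × CP, p.1 ∈ Qs → p.2 ∈ Qs → nrel v p.1 p.2 → p ∈ B

/-- The functional `∞̄` (resp. its extension `∞̄~`). -/
noncomputable def fnBarInf : CP → EReal
  | zero => 0
  | _ => ⊤

/-- The functional `0̄_k` (resp. its extension). -/
noncomputable def fnBarZero (k : ℕ+) : CP → EReal
  | zero => 0
  | inf => ⊤
  | elt _ i => if i = k then 0 else ⊤

/-- The functional `c_k : a_k ↦ c·a` (extended by `+∞` off `Q_k`). -/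
noncomputable def fnLam (c : ℝ) (k : ℕ+) : CP → EReal
  | zero => 0
  | inf => ⊤
  | elt a i => if i = k then ((c * a.1 : ℝ) : EReal) else ⊤

/-- The zero functional. -/
noncomputable def fnZero : CP → EReal := fun _ => 0

/-- The barrel `B_j = {(x,y) ∈ Q_j² : x ⪯ y + w/j}`. -/
def Bset (w : ℝ) (j : ℕ+) : Set (CP × CP) :=
  {p | p.1 ∈ Q j ∧ p.2 ∈ Q j ∧ nrel (w / (j : ℝ)) p.1 p.2}

/-- The barrel `B = ⋃_j B_j`. -/
def BigB (w : ℝ) : Set (CP × CP) := ⋃ (j : ℕ+), Bset w j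

/-- The map `Λ : Q_j → [0,∞]`, `a_j ↦ a/j`. -/
noncomputable def Lam (j : ℕ+) : CP → ℝ≥0∞
  | zero => 0
  | inf => ⊤
  | elt a _ => ENNReal.ofReal (a.1 / (j : ℝ))


lemma zero_add' (x : CP) : add zero x = x := by cases x <;> rfl
lemma add_zero' (x : CP) : add x zero = x := by cases x <;> rfl
lemma inf_add' (x : CP) : add inf x = inf := by cases x <;> rfl
lemma add_inf' (x : CP) : add x inf = inf := by cases x <;> rfl
lemma elt_add_elt (a b : Rpos) (i : ℕ+) :
    add (elt a i) (elt b i) = elt ⟨a.1 + b.1, add_pos a.2 b.2⟩ i := by simp [add]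
lemma elt_add_elt_ne (a b : Rpos) {i j : ℕ+} (h : i ≠ j) :
    add (elt a i) (elt b j) = inf := by simp [add, h]
lemma smul_zero' (r : ℝ≥0) : smul r zero = zero := by
  unfold smul; split <;> rfl
lemma pos_of_ne {r : ℝ≥0} (hr : r ≠ 0) : (0:ℝ) < (r:ℝ) := by
  exact_mod_cast pos_iff_ne_zero.mpr hr
lemma smul_inf {r : ℝ≥0} (hr : r ≠ 0) : smul r inf = inf := by
  unfold smul; rw [dif_neg hr]
lemma smul_elt {r : ℝ≥0} (hr : r ≠ 0) (a : Rpos) (i : ℕ+) :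
    smul r (elt a i) = elt ⟨(r:ℝ) * a.1, mul_pos (pos_of_ne hr) a.2⟩ i := by
  unfold smul; rw [dif_neg hr]
lemma zero_smul' (x : CP) : smul 0 x = zero := by unfold smul; rw [dif_pos rfl]
lemma smul_one (x : CP) : smul 1 x = x := by
  cases x with
  | zero => exact smul_zero' 1
  | inf => exact smul_inf one_ne_zero
  | elt a i => rw [smul_elt one_ne_zero]; simp
lemma smul_smul' (r s : ℝ≥0) (x : CP) : smul r (smul s x) = smul (r * s) x := by
  rcases eq_or_ne r 0 with hr | hr
  · subst hr; simp [zero_smul', zero_mul]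
  rcases eq_or_ne s 0 with hs | hs
  · subst hs; rw [zero_smul', mul_zero, zero_smul', smul_zero']
  have hrs : r * s ≠ 0 := mul_ne_zero hr hs
  cases x with
  | zero => rw [smul_zero', smul_zero', smul_zero']
  | inf => rw [smul_inf hs, smul_inf hr, smul_inf hrs]
  | elt a i => rw [smul_elt hs, smul_elt hr, smul_elt hrs]; simp [mul_assoc]
lemma smul_add' (r : ℝ≥0) (x y : CP) :
    smul r (add x y) = add (smul r x) (smul r y) := by
  rcases eq_or_ne r 0 with hr | hr
  · subst hr; simp [zero_smul', add]
  cases x with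
  | zero => rw [zero_add', smul_zero', zero_add']
  | inf => rw [inf_add', smul_inf hr, inf_add']
  | elt a i =>
    cases y with
    | zero => rw [add_zero', smul_zero', add_zero']
    | inf => rw [add_inf', smul_inf hr, smul_elt hr, add_inf']
    | elt b j =>
      rcases eq_or_ne i j with hij | hij
      · subst hij
        rw [elt_add_elt, smul_elt hr, smul_elt hr, smul_elt hr, elt_add_elt]
        simp [mul_add]
      · rw [elt_add_elt_ne _ _ hij, smul_inf hr, smul_elt hr, smul_elt hr,
          elt_add_elt_ne _ _ hij]
lemma smul_eq_zero_iff {r : ℝ≥0} (hr : r ≠ 0) {x : CP} : smul r x = zero ↔ x = zero := by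
  cases x with
  | zero => simp [smul_zero']
  | inf => simp [smul_inf hr]
  | elt a i => simp [smul_elt hr]
lemma nrel_zero_left (v : ℝ) (y : CP) : nrel v zero y := by cases y <;> trivial
lemma nrel_inf_right (v : ℝ) (x : CP) : nrel v x inf := by cases x <;> trivial
lemma nrel_elt_elt {v : ℝ} {a b : Rpos} {i j : ℕ+} :
    nrel v (elt a i) (elt b j) ↔ i = j ∧ a.1 ≤ b.1 + (i:ℝ) * v := Iff.rfl
lemma nrel_inf_iff {v : ℝ} {y : CP} : nrel v inf y ↔ y = inf := by
  cases y <;> simp [nrel]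
lemma nrel_zero_right_iff {v : ℝ} {x : CP} : nrel v x zero ↔ x = zero := by
  cases x <;> simp [nrel]
lemma not_nrel_elt_zero {v : ℝ} {a : Rpos} {i : ℕ+} : ¬ nrel v (elt a i) zero := by
  simp [nrel]
lemma nrel_mono {v v' : ℝ} (h : v ≤ v') {x y : CP} (hx : nrel v x y) : nrel v' x y := by
  cases x with
  | zero => exact nrel_zero_left _ _
  | inf => rw [nrel_inf_iff] at *; exact hx
  | elt a i =>
    cases y with
    | zero => exact absurd hx not_nrel_elt_zero
    | inf => trivial
    | elt b j =>
      obtain ⟨hij, hle⟩ := hx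
      refine ⟨hij, hle.trans ?_⟩
      have : (i:ℝ) * v ≤ (i:ℝ) * v' := by
        apply mul_le_mul_of_nonneg_left h (by positivity)
      linarith
lemma zero_mem_Q (j : ℕ+) : zero ∈ Q j := Or.inl rfl
lemma inf_mem_Q (j : ℕ+) : inf ∈ Q j := Or.inr (Or.inl rfl)
lemma elt_mem_Q (a : Rpos) (i : ℕ+) : elt a i ∈ Q i := Or.inr (Or.inr ⟨a, rfl⟩)
lemma exists_mem_Q (x : CP) : ∃ j, x ∈ Q j := by
  cases x with
  | zero => exact ⟨1, zero_mem_Q 1⟩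
  | inf => exact ⟨1, inf_mem_Q 1⟩
  | elt a i => exact ⟨i, elt_mem_Q a i⟩
lemma elt_mem_Q_iff {a : Rpos} {i j : ℕ+} : elt a i ∈ Q j ↔ i = j := by
  constructor
  · rintro (h | h | ⟨b, h⟩) <;> simp_all
  · rintro rfl; exact elt_mem_Q a i
lemma pnat_coe_ne (i : ℕ+) : ((i:ℕ):ℝ) ≠ 0 := by positivity
lemma mem_BigB_iff {w : ℝ} {p : CP × CP} :
    p ∈ BigB w ↔ p.1 = zero ∨ p.2 = inf ∨
      ∃ (i : ℕ+) (a b : Rpos), p.1 = elt a i ∧ p.2 = elt b i ∧ a.1 ≤ b.1 + w := by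
  obtain ⟨x, y⟩ := p
  rw [BigB, Set.mem_iUnion]
  constructor
  · rintro ⟨j, h1, h2, h3⟩
    cases x with
    | zero => exact Or.inl rfl
    | inf => exact Or.inr (Or.inl (nrel_inf_iff.mp h3))
    | elt a i =>
      have hij : i = j := elt_mem_Q_iff.mp h1
      cases y with
      | zero => exact absurd h3 not_nrel_elt_zero
      | inf => exact Or.inr (Or.inl rfl)
      | elt b j' =>
        obtain ⟨hij', hle⟩ := h3
        refine Or.inr (Or.inr ⟨i, a, b, rfl, by rw [hij'], ?_⟩)
        rwa [hij, mul_div_cancel₀ _ (pnat_coe_ne j)] at hle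
  · rintro (h | h | ⟨i, a, b, h1, h2, hab⟩)
    · subst h
      obtain ⟨j, hQ⟩ := exists_mem_Q y
      exact ⟨j, zero_mem_Q j, hQ, nrel_zero_left _ _⟩
    · subst h
      obtain ⟨j, hQ⟩ := exists_mem_Q x
      exact ⟨j, hQ, inf_mem_Q j, nrel_inf_right _ _⟩
    · subst h1; subst h2
      refine ⟨i, elt_mem_Q a i, elt_mem_Q b i, rfl, ?_⟩
      rw [mul_div_cancel₀ _ (pnat_coe_ne i)]
      exact hab
lemma BigB_convex {w : ℝ} (hw : 0 ≤ w) {p q : CP × CP} (hp : p ∈ BigB w) (hq : q ∈ BigB w)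
    (t : ℝ≥0) (ht : t ≤ 1) :
    (add (smul t p.1) (smul (1 - t) q.1), add (smul t p.2) (smul (1 - t) q.2)) ∈ BigB w := by
  rcases eq_or_ne t 0 with h0 | h0
  · subst h0
    simp only [zero_smul', zero_add', tsub_zero, smul_one]
    exact hq
  rcases eq_or_ne t 1 with h1 | h1
  · subst h1
    simp only [tsub_self, zero_smul', add_zero', smul_one]
    exact hp
  set s : ℝ≥0 := 1 - t with hsdef
  have hs0 : s ≠ 0 := by
    intro h
    exact h1 (le_antisymm ht (tsub_eq_zero_iff_le.mp h))
  have hts : (t:ℝ) + (s:ℝ) = 1 := by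
    rw [hsdef, NNReal.coe_sub ht]; push_cast; ring
  have htpos : (0:ℝ) < t := pos_of_ne h0
  have hspos : (0:ℝ) < s := pos_of_ne hs0
  have htle : (t:ℝ) ≤ 1 := by exact_mod_cast ht
  have hsle : (s:ℝ) ≤ 1 := by linarith
  rw [mem_BigB_iff] at hp hq ⊢
  dsimp only
  rcases hp with hp1 | hp2 | ⟨i, a, b, hpa, hpb, hab⟩
  · -- p.1 = zero
    rw [hp1, smul_zero', zero_add']
    rcases hq with hq1 | hq2 | ⟨i, a, b, hqa, hqb, hab⟩
    · rw [hq1, smul_zero']; exact Or.inl rfl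
    · rw [hq2, smul_inf hs0, add_inf']; exact Or.inr (Or.inl rfl)
    · rw [hqa, hqb, smul_elt hs0, smul_elt hs0]
      cases hp2 : p.2 with
      | zero =>
        rw [smul_zero', zero_add']
        refine Or.inr (Or.inr ⟨i, _, _, rfl, rfl, ?_⟩)
        simp only
        nlinarith [a.2, b.2]
      | inf => rw [smul_inf h0, inf_add']; exact Or.inr (Or.inl rfl)
      | elt c j =>
        rw [smul_elt h0]
        rcases eq_or_ne j i with hji | hji
        · subst hji
          rw [elt_add_elt]
          refine Or.inr (Or.inr ⟨j, _, _, rfl, rfl, ?_⟩)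
          simp only
          nlinarith [a.2, b.2, c.2]
        · rw [elt_add_elt_ne _ _ hji]; exact Or.inr (Or.inl rfl)
  · -- p.2 = inf
    rw [hp2, smul_inf h0, inf_add']
    exact Or.inr (Or.inl rfl)
  · -- p elt pair
    rw [hpa, hpb, smul_elt h0, smul_elt h0]
    rcases hq with hq1 | hq2 | ⟨i', a', b', hqa, hqb, hab'⟩
    · -- q.1 = zero
      rw [hq1, smul_zero', add_zero']
      cases hq2 : q.2 with
      | zero =>
        rw [smul_zero', add_zero']
        refine Or.inr (Or.inr ⟨i, _, _, rfl, rfl, ?_⟩)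
        simp only
        nlinarith [a.2, b.2]
      | inf => rw [smul_inf hs0, add_inf']; exact Or.inr (Or.inl rfl)
      | elt c j =>
        rw [smul_elt hs0]
        rcases eq_or_ne i j with hij | hij
        · subst hij
          rw [elt_add_elt]
          refine Or.inr (Or.inr ⟨i, _, _, rfl, rfl, ?_⟩)
          simp only
          nlinarith [a.2, b.2, c.2]
        · rw [elt_add_elt_ne _ _ hij]; exact Or.inr (Or.inl rfl)
    · rw [hq2, smul_inf hs0, add_inf']; exact Or.inr (Or.inl rfl)
    · rw [hqa, hqb, smul_elt hs0, smul_elt hs0]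
      rcases eq_or_ne i i' with hii | hii
      · subst hii
        rw [elt_add_elt, elt_add_elt]
        refine Or.inr (Or.inr ⟨i, _, _, rfl, rfl, ?_⟩)
        simp only
        nlinarith [a.2, b.2, a'.2, b'.2]
      · rw [elt_add_elt_ne _ _ hii, elt_add_elt_ne _ _ hii]
        exact Or.inr (Or.inl rfl)
lemma ereal_one_ne_bot : (1:EReal) ≠ ⊥ := by
  rw [show (1:EReal) = ((1:ℝ):EReal) by norm_cast]; exact EReal.coe_ne_bot 1
lemma ereal_zero_le_one : (0:EReal) ≤ 1 := by
  rw [show (1:EReal) = ((1:ℝ):EReal) by norm_cast]; exact_mod_cast zero_le_one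
lemma ereal_top_add_one : (⊤:EReal) + 1 = ⊤ := EReal.top_add_of_ne_bot ereal_one_ne_bot
lemma ereal_le_top_add_one (x : EReal) : x ≤ ⊤ + 1 := by
  rw [ereal_top_add_one]; exact le_top
lemma ereal_le_add_one (x : EReal) : x ≤ x + 1 := by
  calc x = x + 0 := by rw [add_zero]
  _ ≤ x + 1 := add_le_add_right ereal_zero_le_one x
lemma ereal_zero_le_add_one {y : EReal} (h : 0 ≤ y) : (0:EReal) ≤ y + 1 :=
  le_trans h (ereal_le_add_one y)
lemma ereal_top_add_top : (⊤:EReal) + ⊤ = ⊤ := EReal.top_add_of_ne_bot (by simp)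

lemma add_eq_zero_iff' {x y : CP} : add x y = zero ↔ x = zero ∧ y = zero := by
  cases x <;> cases y <;> simp [add]
  split <;> simp

lemma fnBarInf_nonneg (x : CP) : 0 ≤ fnBarInf x := by
  cases x <;> simp [fnBarInf]
lemma fnBarInf_ne_bot (x : CP) : fnBarInf x ≠ ⊥ := by
  cases x <;> simp [fnBarInf]
lemma fnBarInf_eq_top {x : CP} (h : x ≠ zero) : fnBarInf x = ⊤ := by
  cases x <;> simp_all [fnBarInf]

lemma fnBarInf_dual : InDualOn Set.univ fnBarInf := by
  refine ⟨⟨rfl, fnBarInf_ne_bot, ?_, ?_⟩, 1, one_pos, ?_⟩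
  · intro x _ y _
    rcases eq_or_ne x zero with rfl | hx
    · rw [zero_add']; show fnBarInf y = 0 + fnBarInf y; rw [zero_add]
    rcases eq_or_ne y zero with rfl | hy
    · rw [add_zero']; show fnBarInf x = fnBarInf x + 0; rw [add_zero]
    have hxy : add x y ≠ zero := by rw [Ne, add_eq_zero_iff']; tauto
    rw [fnBarInf_eq_top hx, fnBarInf_eq_top hy, fnBarInf_eq_top hxy, ereal_top_add_top]
  · intro r x _
    rcases eq_or_ne r 0 with rfl | hr
    · rw [zero_smul']; show (0:EReal) = _
      rw [NNReal.coe_zero, EReal.coe_zero, zero_mul]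
    cases x with
    | zero => rw [smul_zero']; show (0:EReal) = _ * 0; rw [mul_zero]
    | inf =>
      rw [smul_inf hr]
      exact (EReal.coe_mul_top_of_pos (pos_of_ne hr)).symm
    | elt a i =>
      rw [smul_elt hr]
      exact (EReal.coe_mul_top_of_pos (pos_of_ne hr)).symm
  · intro x _ y _ hxy
    cases x with
    | zero => exact ereal_zero_le_add_one (fnBarInf_nonneg y)
    | inf => rw [nrel_inf_iff.mp hxy, fnBarInf_eq_top (by simp)]; exact ereal_le_top_add_one _
    | elt a i =>
      cases y with
      | zero => exact absurd hxy not_nrel_elt_zero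
      | inf => rw [fnBarInf_eq_top (show inf ≠ zero by simp)]; exact ereal_le_top_add_one _
      | elt b j => rw [fnBarInf_eq_top (show elt b j ≠ zero by simp)]; exact ereal_le_top_add_one _

lemma fnBarInf_BigB {w : ℝ} : ∀ p ∈ BigB w, fnBarInf p.1 ≤ fnBarInf p.2 + 1 := by
  intro p hp
  rcases mem_BigB_iff.mp hp with h | h | ⟨i, a, b, h1, h2, hab⟩
  · rw [h]; exact ereal_zero_le_add_one (fnBarInf_nonneg _)
  · rw [h, fnBarInf_eq_top (show inf ≠ zero by simp)]; exact ereal_le_top_add_one _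
  · rw [h2, fnBarInf_eq_top (show elt b i ≠ zero by simp)]; exact ereal_le_top_add_one _
lemma fnBarZero_nonneg (k : ℕ+) (x : CP) : 0 ≤ fnBarZero k x := by
  cases x with
  | zero => simp [fnBarZero]
  | inf => simp [fnBarZero]
  | elt a i => rw [fnBarZero]; split <;> simp
lemma fnBarZero_ne_bot (k : ℕ+) (x : CP) : fnBarZero k x ≠ ⊥ := by
  cases x with
  | zero => simp [fnBarZero]
  | inf => simp [fnBarZero]
  | elt a i => rw [fnBarZero]; split <;> simp

lemma fnBarZero_dual (k : ℕ+) : InDualOn Set.univ (fnBarZero k) := by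
  refine ⟨⟨rfl, fnBarZero_ne_bot k, ?_, ?_⟩, 1, one_pos, ?_⟩
  · intro x _ y _
    cases x with
    | zero => rw [zero_add']; show _ = 0 + _; rw [zero_add]
    | inf =>
      rw [inf_add']
      show (⊤:EReal) = ⊤ + _
      rw [EReal.top_add_of_ne_bot (fnBarZero_ne_bot k y)]
    | elt a i =>
      cases y with
      | zero => rw [add_zero']; show _ = _ + 0; rw [add_zero]
      | inf =>
        rw [add_inf']
        show (⊤:EReal) = _ + ⊤
        rw [EReal.add_top_of_ne_bot (fnBarZero_ne_bot k (elt a i))]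
      | elt b j =>
        rcases eq_or_ne i j with rfl | hij
        · rw [elt_add_elt]
          by_cases hik : i = k
          · simp [fnBarZero, hik]
          · simp [fnBarZero, hik, ereal_top_add_top]
        · rw [elt_add_elt_ne _ _ hij]
          show (⊤:EReal) = _
          by_cases hik : i = k
          · have hjk : j ≠ k := fun h => hij (hik.trans h.symm)
            simp [fnBarZero, hik, hjk]
          · simp [fnBarZero, hik]
            split <;> simp [ereal_top_add_top]
  · intro r x _
    rcases eq_or_ne r 0 with rfl | hr
    · rw [zero_smul']; show (0:EReal) = _
      rw [NNReal.coe_zero, EReal.coe_zero, zero_mul]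
    cases x with
    | zero => rw [smul_zero']; show (0:EReal) = _ * 0; rw [mul_zero]
    | inf =>
      rw [smul_inf hr]
      exact (EReal.coe_mul_top_of_pos (pos_of_ne hr)).symm
    | elt a i =>
      rw [smul_elt hr]
      show (if i = k then _ else _) = _ * (if i = k then _ else _)
      by_cases hik : i = k
      · simp [hik]
      · simp [hik, EReal.coe_mul_top_of_pos (pos_of_ne hr)]
  · intro x _ y _ hxy
    cases x with
    | zero => exact ereal_zero_le_add_one (fnBarZero_nonneg k y)
    | inf =>
      rw [nrel_inf_iff.mp hxy]
      exact ereal_le_add_one _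
    | elt a i =>
      cases y with
      | zero => exact absurd hxy not_nrel_elt_zero
      | inf => exact ereal_le_top_add_one _
      | elt b j =>
        obtain ⟨rfl, -⟩ := hxy
        exact ereal_le_add_one _

lemma fnBarZero_BigB (k : ℕ+) {w : ℝ} : ∀ p ∈ BigB w, fnBarZero k p.1 ≤ fnBarZero k p.2 + 1 := by
  intro p hp
  rcases mem_BigB_iff.mp hp with h | h | ⟨i, a, b, h1, h2, hab⟩
  · rw [h]; exact ereal_zero_le_add_one (fnBarZero_nonneg k _)
  · rw [h]; exact ereal_le_top_add_one _
  · rw [h1, h2]; exact ereal_le_add_one _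

lemma fnLam_elt (c : ℝ) (k : ℕ+) (a : Rpos) (i : ℕ+) :
    fnLam c k (elt a i) = if i = k then ((c * a.1 : ℝ) : EReal) else ⊤ := rfl
lemma fnLam_nonneg {c : ℝ} (hc : 0 < c) (k : ℕ+) (x : CP) : 0 ≤ fnLam c k x := by
  cases x with
  | zero => simp [fnLam]
  | inf => simp [fnLam]
  | elt a i =>
    rw [fnLam_elt]; split
    · exact_mod_cast (mul_pos hc a.2).le
    · exact le_top
lemma fnLam_ne_bot (c : ℝ) (k : ℕ+) (x : CP) : fnLam c k x ≠ ⊥ := by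
  cases x with
  | zero => simp [fnLam]
  | inf => simp [fnLam]
  | elt a i =>
    rw [fnLam_elt]; split
    · exact EReal.coe_ne_bot _
    · simp

lemma ereal_coe_le_coe_add_one {x y : ℝ} (h : x ≤ y + 1) : (x:EReal) ≤ (y:EReal) + 1 := by
  rw [show (1:EReal) = ((1:ℝ):EReal) by norm_cast, ← EReal.coe_add]
  exact_mod_cast h

lemma fnLam_dual {c : ℝ} (hc : 0 < c) (k : ℕ+) : InDualOn Set.univ (fnLam c k) := by
  refine ⟨⟨rfl, fnLam_ne_bot c k, ?_, ?_⟩, (c * (k:ℝ))⁻¹, by positivity, ?_⟩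
  · intro x _ y _
    cases x with
    | zero => rw [zero_add']; show _ = 0 + _; rw [zero_add]
    | inf =>
      rw [inf_add']
      show (⊤:EReal) = ⊤ + _
      rw [EReal.top_add_of_ne_bot (fnLam_ne_bot c k y)]
    | elt a i =>
      cases y with
      | zero => rw [add_zero']; show _ = _ + 0; rw [add_zero]
      | inf =>
        rw [add_inf']
        show (⊤:EReal) = _ + ⊤
        rw [EReal.add_top_of_ne_bot (fnLam_ne_bot c k (elt a i))]
      | elt b j =>
        rcases eq_or_ne i j with rfl | hij
        · rw [elt_add_elt, fnLam_elt, fnLam_elt, fnLam_elt]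
          by_cases hik : i = k
          · simp only [hik, if_pos rfl, if_true]
            rw [← EReal.coe_add, EReal.coe_eq_coe_iff]
            show c * (a.1 + b.1) = c * a.1 + c * b.1
            ring
          · simp [hik, ereal_top_add_top]
        · rw [elt_add_elt_ne _ _ hij]
          show (⊤:EReal) = _
          rw [fnLam_elt, fnLam_elt]
          by_cases hik : i = k
          · have hjk : j ≠ k := fun h => hij (hik.trans h.symm)
            rw [if_pos hik, if_neg hjk, EReal.add_top_of_ne_bot (EReal.coe_ne_bot _)]
          · rw [if_neg hik, EReal.top_add_of_ne_bot]
            split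
            · exact EReal.coe_ne_bot _
            · simp
  · intro r x _
    rcases eq_or_ne r 0 with rfl | hr
    · rw [zero_smul']; show (0:EReal) = _
      rw [NNReal.coe_zero, EReal.coe_zero, zero_mul]
    cases x with
    | zero => rw [smul_zero']; show (0:EReal) = _ * 0; rw [mul_zero]
    | inf =>
      rw [smul_inf hr]
      exact (EReal.coe_mul_top_of_pos (pos_of_ne hr)).symm
    | elt a i =>
      rw [smul_elt hr, fnLam_elt, fnLam_elt]
      by_cases hik : i = k
      · rw [if_pos hik, if_pos hik, ← EReal.coe_mul, EReal.coe_eq_coe_iff]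
        show c * ((r:ℝ) * a.1) = (r:ℝ) * (c * a.1)
        ring
      · rw [if_neg hik, if_neg hik, EReal.coe_mul_top_of_pos (pos_of_ne hr)]
  · intro x _ y _ hxy
    cases x with
    | zero => exact ereal_zero_le_add_one (fnLam_nonneg hc k y)
    | inf =>
      rw [nrel_inf_iff.mp hxy]
      exact ereal_le_add_one _
    | elt a i =>
      cases y with
      | zero => exact absurd hxy not_nrel_elt_zero
      | inf => exact ereal_le_top_add_one _
      | elt b j =>
        obtain ⟨rfl, hle⟩ := hxy
        rw [fnLam_elt, fnLam_elt]
        by_cases hik : i = k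
        · rw [if_pos hik, if_pos hik]
          apply ereal_coe_le_coe_add_one
          subst hik
          have hk : (0:ℝ) < (i:ℝ) := by positivity
          have h2 : (i:ℝ) * (c * (i:ℝ))⁻¹ = c⁻¹ := by field_simp
          rw [h2] at hle
          have := mul_le_mul_of_nonneg_left hle hc.le
          calc c * a.1 ≤ c * (b.1 + c⁻¹) := this
          _ = c * b.1 + 1 := by field_simp
        · rw [if_neg hik, if_neg hik]
          exact ereal_le_add_one _

lemma fnLam_BigB {c w : ℝ} (hc : 0 < c) (hcw : c * w ≤ 1) (k : ℕ+) :
    ∀ p ∈ BigB w, fnLam c k p.1 ≤ fnLam c k p.2 + 1 := by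
  intro p hp
  rcases mem_BigB_iff.mp hp with h | h | ⟨i, a, b, h1, h2, hab⟩
  · rw [h]; exact ereal_zero_le_add_one (fnLam_nonneg hc k _)
  · rw [h]; exact ereal_le_top_add_one _
  · rw [h1, h2, fnLam_elt, fnLam_elt]
    by_cases hik : i = k
    · rw [if_pos hik, if_pos hik]
      apply ereal_coe_le_coe_add_one
      nlinarith
    · rw [if_neg hik, if_neg hik]
      exact ereal_le_add_one _
lemma ereal_coe_lt_coe {x y : ℝ} (h : x < y) : (x:EReal) < (y:EReal) := by exact_mod_cast h
lemma ereal_zero_add_one_lt_top : (0:EReal) + 1 < ⊤ := by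
  rw [zero_add, show (1:EReal) = ((1:ℝ):EReal) by norm_cast]
  exact EReal.coe_lt_top 1

lemma BigB_barrel {w : ℝ} (hw : 0 < w) : IsBarrelOn Set.univ (BigB w) := by
  refine ⟨fun p _ => ⟨Set.mem_univ _, Set.mem_univ _⟩,
    fun p hp q hq t ht => BigB_convex hw.le hp hq t ht, ?_, ?_⟩
  · -- condition (3)
    intro b _
    refine ⟨1, one_pos, ?_⟩
    intro a ha
    obtain ⟨-, h1, h2⟩ := ha
    cases b with
    | zero =>
      obtain rfl : a = zero := nrel_zero_right_iff.mp h1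
      exact ⟨1, one_pos, (zero, zero), mem_BigB_iff.mpr (Or.inl rfl),
        by simp [smul_one]⟩
    | inf =>
      obtain rfl : a = inf := nrel_inf_iff.mp h2
      exact ⟨1, one_pos, (inf, inf), mem_BigB_iff.mpr (Or.inr (Or.inl rfl)),
        by simp [smul_one]⟩
    | elt b0 k =>
      cases a with
      | zero => exact absurd h2 not_nrel_elt_zero
      | inf => exact absurd (nrel_inf_iff.mp h1) (by simp)
      | elt a0 i =>
        obtain ⟨rfl, -⟩ := h1
        set l : ℝ≥0 := Real.toNNReal (a0.1 / w) with hl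
        have hdivpos : (0:ℝ) < a0.1 / w := div_pos a0.2 hw
        have hlpos : 0 < l := by rw [hl, Real.toNNReal_pos]; exact hdivpos
        have hlne : l ≠ 0 := hlpos.ne'
        have hlinv : l⁻¹ ≠ 0 := inv_ne_zero hlne
        have hlval : (l:ℝ) = a0.1 / w := Real.coe_toNNReal _ hdivpos.le
        have hlw : a0.1 ≤ (l:ℝ) * w := by rw [hlval]; field_simp; exact le_rfl
        have hlr : (0:ℝ) < l := pos_of_ne hlne
        refine ⟨l, hlpos, (smul l⁻¹ (elt a0 i), smul l⁻¹ (elt b0 i)), ?_, ?_⟩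
        · rw [smul_elt hlinv, smul_elt hlinv]
          refine mem_BigB_iff.mpr (Or.inr (Or.inr ⟨i, _, _, rfl, rfl, ?_⟩))
          show ((l⁻¹ : ℝ≥0) : ℝ) * a0.1 ≤ ((l⁻¹ : ℝ≥0) : ℝ) * b0.1 + w
          rw [NNReal.coe_inv]
          calc ((l:ℝ))⁻¹ * a0.1 ≤ ((l:ℝ))⁻¹ * ((l:ℝ) * w) :=
                mul_le_mul_of_nonneg_left hlw (by positivity)
          _ = w := by field_simp
          _ ≤ ((l:ℝ))⁻¹ * b0.1 + w := le_add_of_nonneg_left (mul_nonneg (by positivity) b0.2.le)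
        · show (smul l (smul l⁻¹ (elt a0 i)), smul l (smul l⁻¹ (elt b0 i))) =
            (elt a0 i, elt b0 i)
          rw [smul_smul', smul_smul', mul_inv_cancel₀ hlne, smul_one, smul_one]
  · -- condition (4)
    intro a _ b _ hab
    rw [mem_BigB_iff] at hab
    push_neg at hab
    obtain ⟨ha0, hbinf, hnot⟩ := hab
    cases b with
    | zero =>
      refine ⟨fnBarInf, fnBarInf_dual, ?_, fnBarInf_BigB⟩
      rw [fnBarInf_eq_top ha0]
      show (0:EReal) + 1 < ⊤
      exact ereal_zero_add_one_lt_top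
    | inf => exact absurd rfl hbinf
    | elt b0 k =>
      cases a with
      | zero => exact absurd rfl ha0
      | inf =>
        refine ⟨fnBarZero k, fnBarZero_dual k, ?_, fnBarZero_BigB k⟩
        show fnBarZero k (elt b0 k) + 1 < fnBarZero k inf
        simp only [fnBarZero, if_pos rfl]
        exact ereal_zero_add_one_lt_top
      | elt a0 i =>
        rcases eq_or_ne i k with rfl | hik
        · -- same index; must have b0 + w < a0
          have hlt : b0.1 + w < a0.1 := hnot i a0 b0 rfl rfl
          refine ⟨fnLam w⁻¹ i, fnLam_dual (by positivity) i,
            ?_, fnLam_BigB (by positivity) (by field_simp; exact le_rfl) i⟩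
          rw [fnLam_elt, fnLam_elt, if_pos rfl, if_pos rfl]
          rw [show (1:EReal) = ((1:ℝ):EReal) by norm_cast, ← EReal.coe_add]
          apply ereal_coe_lt_coe
          calc w⁻¹ * b0.1 + 1 = w⁻¹ * (b0.1 + w) := by field_simp
          _ < w⁻¹ * a0.1 := by apply mul_lt_mul_of_pos_left hlt (by positivity)
        · refine ⟨fnBarZero k, fnBarZero_dual k, ?_, fnBarZero_BigB k⟩
          show fnBarZero k (elt b0 k) + 1 < fnBarZero k (elt a0 i)
          simp only [fnBarZero, if_pos rfl, if_neg hik]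
          exact ereal_zero_add_one_lt_top
lemma mem_zero_zero {B : Set (CP × CP)} (hB : IsBarrelOn Set.univ B) : (zero, zero) ∈ B := by
  obtain ⟨-, -, h3, -⟩ := hB
  obtain ⟨v, hv, h⟩ := h3 zero (Set.mem_univ _)
  obtain ⟨l, hl, p, hp, heq⟩ :=
    h zero ⟨Set.mem_univ _, nrel_zero_left _ _, nrel_zero_left _ _⟩
  have h1 : smul l p.1 = zero := congrArg Prod.fst heq
  have h2 : smul l p.2 = zero := congrArg Prod.snd heq
  have hp1 : p.1 = zero := (smul_eq_zero_iff hl.ne').mp h1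
  have hp2 : p.2 = zero := (smul_eq_zero_iff hl.ne').mp h2
  have : p = (zero, zero) := Prod.ext hp1 hp2
  rwa [this] at hp

lemma scale_down {B : Set (CP × CP)} (hB : IsBarrelOn Set.univ B) {p : CP × CP}
    (hp : p ∈ B) (t : ℝ≥0) (ht : t ≤ 1) : (smul t p.1, smul t p.2) ∈ B := by
  have h := hB.2.1 p hp (zero, zero) (mem_zero_zero hB) t ht
  simpa [smul_zero', add_zero'] using h

lemma scaleSet_mono {B : Set (CP × CP)} (hB : IsBarrelOn Set.univ B) {l L : ℝ≥0}
    (hlL : l ≤ L) (hL : L ≠ 0) : scaleSet l B ⊆ scaleSet L B := by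
  rintro x ⟨p, hp, heq⟩
  have hd1 : l / L ≤ 1 := by
    rw [div_le_one (pos_iff_ne_zero.mpr hL)]
    exact hlL
  refine ⟨(smul (l / L) p.1, smul (l / L) p.2), scale_down hB hp _ hd1, ?_⟩
  show (smul L (smul (l / L) p.1), smul L (smul (l / L) p.2)) = x
  have hc : L * (l / L) = l := by rw [mul_comm, div_mul_cancel₀ _ hL]
  rw [smul_smul', smul_smul', hc]
  exact heq

lemma combo_pos {t : ℝ} (h0 : 0 ≤ t) (h1 : t ≤ 1) (x y : Rpos) :
    0 < t * x.1 + (1 - t) * y.1 := by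
  rcases lt_or_eq_of_le h0 with ht | rfl
  · nlinarith [x.2, y.2]
  · nlinarith [y.2]

lemma combo_eq (t : ℝ≥0) (ht : t ≤ 1) (x y z : Rpos) (k : ℕ+)
    (hz : z.1 = (t:ℝ) * x.1 + (1 - (t:ℝ)) * y.1) :
    add (smul t (elt x k)) (smul (1 - t) (elt y k)) = elt z k := by
  rcases eq_or_ne t 0 with rfl | h0
  · rw [zero_smul', zero_add', tsub_zero, smul_one]
    congr 1
    exact Subtype.ext (by rw [hz]; push_cast; ring)
  rcases eq_or_ne t 1 with rfl | h1
  · rw [tsub_self, zero_smul', add_zero', smul_one]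
    congr 1
    exact Subtype.ext (by rw [hz]; push_cast; ring)
  have hs0 : (1 : ℝ≥0) - t ≠ 0 := by
    intro h
    exact h1 (le_antisymm ht (tsub_eq_zero_iff_le.mp h))
  rw [smul_elt h0, smul_elt hs0, elt_add_elt]
  congr 1
  refine Subtype.ext ?_
  show (t:ℝ) * x.1 + ((1 - t : ℝ≥0) : ℝ) * y.1 = z.1
  rw [NNReal.coe_sub ht, hz]
  push_cast
  ring

lemma barreled_univ : BarreledOn Set.univ := by
  intro B hB b _
  cases b with
  | zero =>
    obtain ⟨v, hv, h⟩ := hB.2.2.1 zero (Set.mem_univ _)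
    obtain ⟨l, hl, hmem⟩ :=
      h zero ⟨Set.mem_univ _, nrel_zero_left _ _, nrel_zero_left _ _⟩
    refine ⟨v, hv, l, hl, ?_⟩
    intro a ha
    obtain rfl : a = zero := nrel_zero_right_iff.mp ha.2.1
    exact hmem
  | inf =>
    obtain ⟨v, hv, h⟩ := hB.2.2.1 inf (Set.mem_univ _)
    obtain ⟨l, hl, hmem⟩ :=
      h inf ⟨Set.mem_univ _, nrel_inf_right _ _, nrel_inf_right _ _⟩
    refine ⟨v, hv, l, hl, ?_⟩
    intro a ha
    obtain rfl : a = inf := nrel_inf_iff.mp ha.2.2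
    exact hmem
  | elt b0 k =>
    obtain ⟨v, hv, h⟩ := hB.2.2.1 (elt b0 k) (Set.mem_univ _)
    set v' := min v (b0.1 / (2 * (k:ℝ))) with hv'def
    have hkpos : (0:ℝ) < (k:ℝ) := by positivity
    have hv'pos : 0 < v' := lt_min hv (div_pos b0.2 (by positivity))
    have hv'le : v' ≤ v := min_le_left _ _
    have hkv' : (k:ℝ) * v' ≤ b0.1 / 2 := by
      calc (k:ℝ) * v' ≤ (k:ℝ) * (b0.1 / (2 * (k:ℝ))) :=
        mul_le_mul_of_nonneg_left (min_le_right _ _) hkpos.le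
      _ = b0.1 / 2 := by field_simp
    have hkv'pos : 0 < (k:ℝ) * v' := by positivity
    have hminpos : 0 < b0.1 - (k:ℝ) * v' := by nlinarith [b0.2]
    set amin : Rpos := ⟨b0.1 - (k:ℝ) * v', hminpos⟩ with hamin
    set amax : Rpos := ⟨b0.1 + (k:ℝ) * v', by nlinarith [b0.2]⟩ with hamax
    have hmin_mem : elt amin k ∈ symN Set.univ v (elt b0 k) := by
      refine ⟨Set.mem_univ _, ⟨rfl, ?_⟩, ⟨rfl, ?_⟩⟩
      · show amin.1 ≤ b0.1 + (k:ℝ) * v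
        have : (0:ℝ) ≤ (k:ℝ) * v := by positivity
        simp only [hamin]
        nlinarith
      · show b0.1 ≤ amin.1 + (k:ℝ) * v
        have : (k:ℝ) * v' ≤ (k:ℝ) * v := mul_le_mul_of_nonneg_left hv'le hkpos.le
        simp only [hamin]
        nlinarith
    have hmax_mem : elt amax k ∈ symN Set.univ v (elt b0 k) := by
      refine ⟨Set.mem_univ _, ⟨rfl, ?_⟩, ⟨rfl, ?_⟩⟩
      · show amax.1 ≤ b0.1 + (k:ℝ) * v
        have : (k:ℝ) * v' ≤ (k:ℝ) * v := mul_le_mul_of_nonneg_left hv'le hkpos.le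
        simp only [hamax]
        nlinarith
      · show b0.1 ≤ amax.1 + (k:ℝ) * v
        have : (0:ℝ) ≤ (k:ℝ) * v := by positivity
        simp only [hamax]
        nlinarith
    obtain ⟨l1, hl1, hm1⟩ := h (elt amin k) hmin_mem
    obtain ⟨l2, hl2, hm2⟩ := h (elt amax k) hmax_mem
    set L := max l1 l2 with hLdef
    have hLpos : 0 < L := lt_of_lt_of_le hl1 (le_max_left _ _)
    have hL0 : L ≠ 0 := hLpos.ne'
    refine ⟨v', hv'pos, L, hLpos, ?_⟩
    intro a ha
    obtain ⟨-, han1, han2⟩ := ha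
    cases a with
    | zero => exact absurd han2 not_nrel_elt_zero
    | inf => exact absurd (nrel_inf_iff.mp han1) (by simp)
    | elt a0 i =>
      obtain ⟨rfl, hle1⟩ := han1
      obtain ⟨-, hle2⟩ := han2
      have hge : amin.1 ≤ a0.1 := by
        simp only [hamin]; linarith
      have hle : a0.1 ≤ amax.1 := by
        simp only [hamax]; linarith
      have hden : amax.1 - amin.1 = 2 * ((i:ℝ) * v') := by
        simp only [hamin, hamax]; ring
      have hdenpos : (0:ℝ) < amax.1 - amin.1 := by rw [hden]; positivity
      set tr : ℝ := (amax.1 - a0.1) / (amax.1 - amin.1) with htrdef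
      have htr0 : 0 ≤ tr := div_nonneg (by linarith) hdenpos.le
      have htr1 : tr ≤ 1 := by
        rw [htrdef, div_le_one hdenpos]; linarith
      set t : ℝ≥0 := Real.toNNReal tr with htdef
      have htval : (t:ℝ) = tr := Real.coe_toNNReal _ htr0
      have ht1 : t ≤ 1 := by
        rw [← NNReal.coe_le_coe, htval, NNReal.coe_one]; exact htr1
      obtain ⟨p, hp, hpe⟩ := scaleSet_mono hB (le_max_left l1 l2) hL0 hm1
      obtain ⟨q, hq, hqe⟩ := scaleSet_mono hB (le_max_right l1 l2) hL0 hm2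
      have hp1 : smul L p.1 = elt amin i := congrArg Prod.fst hpe
      have hp2 : smul L p.2 = elt b0 i := congrArg Prod.snd hpe
      have hq1 : smul L q.1 = elt amax i := congrArg Prod.fst hqe
      have hq2 : smul L q.2 = elt b0 i := congrArg Prod.snd hqe
      have hcomb := hB.2.1 p hp q hq t ht1
      refine ⟨_, hcomb, ?_⟩
      show (smul L (add (smul t p.1) (smul (1 - t) q.1)),
            smul L (add (smul t p.2) (smul (1 - t) q.2))) = (elt a0 i, elt b0 i)
      have e1 : smul (L * t) p.1 = smul t (elt amin i) := by
        rw [mul_comm, ← smul_smul', hp1]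
      have e2 : smul (L * t) p.2 = smul t (elt b0 i) := by
        rw [mul_comm, ← smul_smul', hp2]
      have e3 : smul (L * (1 - t)) q.1 = smul (1 - t) (elt amax i) := by
        rw [mul_comm, ← smul_smul', hq1]
      have e4 : smul (L * (1 - t)) q.2 = smul (1 - t) (elt b0 i) := by
        rw [mul_comm, ← smul_smul', hq2]
      rw [smul_add', smul_add', smul_smul', smul_smul', smul_smul', smul_smul',
        e1, e2, e3, e4, Prod.mk.injEq]
      constructor
      · refine combo_eq t ht1 amin amax a0 i ?_
        rw [htval, htrdef]
        field_simp
        ring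
      · refine combo_eq t ht1 b0 b0 b0 i ?_
        ring
/-- for every `u ∈ V` there are `j ∈ ℕ` and `a, b > 0` with
`w < a − b < ju`, so that `(a_j, b_j) ∈ ũ` but `(a_j, b_j) ∉ B`; consequently
`(P, V)` is barreled but not upper-barreled. -/
theorem stmt16 (w : ℝ) (hw : 0 < w) :
    (∀ u : ℝ, 0 < u → ∃ (j : ℕ+) (a b : Rpos),
      w < a.1 - b.1 ∧ a.1 - b.1 < (j : ℝ) * u ∧
      nrel u (elt a j) (elt b j) ∧ (elt a j, elt b j) ∉ BigB w) ∧
    BarreledOn Set.univ ∧ ¬ UpperBarreledOn Set.univ := by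
  have main : ∀ u : ℝ, 0 < u → ∃ (j : ℕ+) (a b : Rpos),
      w < a.1 - b.1 ∧ a.1 - b.1 < (j : ℝ) * u ∧
      nrel u (elt a j) (elt b j) ∧ (elt a j, elt b j) ∉ BigB w := by
    intro u hu
    obtain ⟨n, hn⟩ := exists_nat_gt (w / u)
    set j : ℕ+ := ⟨n + 1, Nat.succ_pos n⟩ with hjdef
    have hjval : ((j : ℕ) : ℝ) = (n : ℝ) + 1 := by
      show (((n + 1 : ℕ)) : ℝ) = (n : ℝ) + 1
      push_cast; ring
    have hj : w < (j : ℝ) * u := by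
      have h1 : w / u < (j : ℝ) := by rw [hjval]; linarith
      calc w = (w / u) * u := by field_simp
      _ < (j : ℝ) * u := mul_lt_mul_of_pos_right h1 hu
    set d : ℝ := (w + (j : ℝ) * u) / 2 with hddef
    have hd1 : w < d := by rw [hddef]; linarith
    have hd2 : d < (j : ℝ) * u := by rw [hddef]; linarith
    refine ⟨j, ⟨1 + d, by linarith⟩, ⟨1, one_pos⟩, ?_, ?_, ?_, ?_⟩
    · show w < (1 + d) - 1; linarith
    · show (1 + d) - 1 < (j : ℝ) * u; linarith
    · exact ⟨rfl, by show (1:ℝ) + d ≤ 1 + (j:ℝ) * u; linarith⟩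
    · intro hmem
      rcases mem_BigB_iff.mp hmem with h | h | ⟨i, x, y, hx, hy, hxy⟩
      · exact absurd h (by simp)
      · exact absurd h (by simp)
      · injection hx with hx1 hx2
        injection hy with hy1 hy2
        rw [← hx1, ← hy1] at hxy
        show False
        have : (1:ℝ) + d ≤ 1 + w := hxy
        linarith
  refine ⟨main, barreled_univ, ?_⟩
  intro hub
  obtain ⟨v, hv, hall⟩ := hub (BigB w) (BigB_barrel hw)
  obtain ⟨j, a, b, h1, h2, h3, h4⟩ := main v hv
  exact h4 (hall (elt a j, elt b j) (Set.mem_univ _) (Set.mem_univ _) h3)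

end CP
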